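/- arXiv:1103.2959 — 2 statements merged into one kernel-verified Lean document; each statement's English description precedes it below -/
import Mathlib

section
/- If N is a minor of a non-regular matroid M obtained by deleting and contracting only elements outside a set R of regular elements of M, and N is non-regular, then every element of R is a regular element of N. In particular, R(M) ⊆ R(N) for such minors N. -/
open Matroid Set

variable {α β : Type*}

/-- Deletion of a set of elements. -/
def Matroid.del (M : Matroid α) (D : Set α) : Matroid α := M ↾ (M.E \ D)

/-- Contraction of a set of elements. -/
def Matroid.con (M : Matroid α) (C : Set α) : Matroid α := (M✶.del C)✶

/-- The rank of a set: the supremum of cardinalities of independent subsets. -/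
noncomputable def Matroid.rnk (M : Matroid α) (X : Set α) : ℕ :=
  sSup (Set.ncard '' {I | M.Indep I ∧ I ⊆ X})

/-- The connectivity function λ(X) = r(X) + r(E − X) − r(M). -/
noncomputable def Matroid.lam (M : Matroid α) (X : Set α) : ℤ :=
  (M.rnk X : ℤ) + (M.rnk (M.E \ X) : ℤ) - (M.rnk M.E : ℤ)

/-- A circuit: a minimal dependent set. -/
def Matroid.IsCircuit' (M : Matroid α) (C : Set α) : Prop :=
  M.Dep C ∧ ∀ D : Set α, D ⊂ C → M.Indep D

/-- A cycle of a (binary) matroid: a disjoint union of circuits. -/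
def Matroid.IsCycle (M : Matroid α) (C : Set α) : Prop :=
  ∃ S : Set (Set α), (∀ c ∈ S, M.IsCircuit' c) ∧ S.PairwiseDisjoint id ∧ C = ⋃₀ S

/-- `M` is representable over the field `𝔽`. -/
def Matroid.IsRepBy (M : Matroid α) (𝔽 : Type) [Field 𝔽] : Prop :=
  ∃ (n : ℕ) (φ : α → (Fin n → 𝔽)), ∀ I : Set α,
    M.Indep I ↔ I ⊆ M.E ∧ LinearIndependent 𝔽 (fun x : I => φ x)

/-- A regular matroid: one representable over every field. -/
def Matroid.IsRegular (M : Matroid α) : Prop :=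
  ∀ (𝔽 : Type) [Field 𝔽], M.IsRepBy 𝔽

/-- A binary matroid: one representable over GF(2). -/
def Matroid.IsBinary (M : Matroid α) : Prop := M.IsRepBy (ZMod 2)

/-- A regular element: one whose deletion and contraction are both regular. -/
def Matroid.IsRegularElem (M : Matroid α) (e : α) : Prop :=
  (M.del {e}).IsRegular ∧ (M.con {e}).IsRegular

/-- An exact j-separation `(X₁, X₂)` of `M`. -/
def Matroid.ExactSep (M : Matroid α) (j : ℕ) (X₁ X₂ : Set α) : Prop :=
  Disjoint X₁ X₂ ∧ X₁ ∪ X₂ = M.E ∧ (j : ℤ) ≤ X₁.ncard ∧ (j : ℤ) ≤ X₂.ncard ∧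
    M.lam X₁ = (j : ℤ) - 1

/-- A j-separation `(X₁, X₂)` of `M`. -/
def Matroid.IsSep (M : Matroid α) (j : ℕ) (X₁ X₂ : Set α) : Prop :=
  Disjoint X₁ X₂ ∧ X₁ ∪ X₂ = M.E ∧ (j : ℤ) ≤ X₁.ncard ∧ (j : ℤ) ≤ X₂.ncard ∧
    M.lam X₁ ≤ (j : ℤ) - 1

/-- A k-connected matroid: no j-separation for j ≤ k − 1. -/
def Matroid.KConnected (M : Matroid α) (k : ℕ) : Prop :=
  ∀ j : ℕ, 1 ≤ j → j ≤ k - 1 → ∀ X₁ X₂ : Set α, ¬ M.IsSep j X₁ X₂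

/-- Matroid isomorphism: a bijection of ground sets preserving independence. -/
def Matroid.MIso (M : Matroid α) (N : Matroid β) : Prop :=
  ∃ e : ↥M.E ≃ ↥N.E, ∀ I : Set ↥M.E,
    M.Indep (Subtype.val '' I) ↔ N.Indep (Subtype.val '' (e '' I))

namespace MyAux

variable {M : Matroid α} {B C D I X Y : Set α}

@[simp] lemma del_ground (M : Matroid α) (D : Set α) : (M.del D).E = M.E \ D := rfl

@[simp] lemma con_ground (M : Matroid α) (C : Set α) : (M.con C).E = M.E \ C := rfl

@[simp] lemma del_indep_iff : (M.del D).Indep I ↔ M.Indep I ∧ I ⊆ M.E \ D :=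
  Matroid.restrict_indep_iff

lemma dual_con (M : Matroid α) (C : Set α) : (M.con C)✶ = M✶.del C := by
  rw [Matroid.con, dual_dual]

lemma del_del (M : Matroid α) (X Y : Set α) : (M.del X).del Y = M.del (X ∪ Y) := by
  show (M ↾ (M.E \ X)) ↾ ((M ↾ (M.E \ X)).E \ Y) = M ↾ (M.E \ (X ∪ Y))
  rw [restrict_ground_eq, M.restrict_restrict_eq diff_subset, diff_diff]

lemma con_con (M : Matroid α) (X Y : Set α) : (M.con X).con Y = M.con (X ∪ Y) := by
  rw [Matroid.con, Matroid.con, dual_dual, del_del]; rfl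

lemma del_eq_self (h : Disjoint M.E D) : M.del D = M := by
  rw [Matroid.del, (h.sdiff_eq_left), restrict_ground_eq_self]

end MyAux
-- reopen
namespace MyAux
variable {M : Matroid α} {B C D I X Y : Set α}

lemma con_base_iff (hC : C ⊆ M.E) :
    (M.con C).IsBase B ↔ ∃ B₀, M.IsBase B₀ ∧ M.IsBasis (B₀ ∩ C) C ∧ B = B₀ \ C := by
  have hCE : M.E \ C ⊆ M✶.E := diff_subset
  rw [Matroid.con, dual_isBase_iff', del_ground, dual_ground]
  rw [show (M✶.del C) = M✶ ↾ (M.E \ C) from rfl, isBase_restrict_iff (X := M.E \ C) hCE]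
  constructor
  · rintro ⟨hD, hBsub⟩
    set D := (M.E \ C) \ B with hDdef
    obtain ⟨D', hD', hDD'⟩ := hD.indep.exists_isBase_superset
    have hint : D' ∩ (M.E \ C) = D := by
      refine (hD.eq_of_subset_indep (hD'.indep.subset inter_subset_left)
        (subset_inter hDD' hD.subset) inter_subset_right).symm
    have hB₀ : M.IsBase (M.E \ D') := hD'.compl_isBase_of_dual
    refine ⟨M.E \ D', hB₀, ?_, ?_⟩
    · have := (hB₀.inter_isBasis_iff_compl_inter_isBasis_dual hC).mpr ?_
      · exact this
      · have h1 : M.E \ (M.E \ D') = D' ∩ M.E := by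
          rw [diff_diff_right, diff_self, empty_union, inter_comm]
        rw [h1]
        have h2 : D' ∩ M.E ∩ (M.E \ C) = D := by
          rw [inter_assoc, inter_eq_self_of_subset_right diff_subset, hint]
        rw [h2]
        exact hD
    · have hBE : B ⊆ M.E \ C := hBsub
      ext x
      simp only [mem_diff]
      constructor
      · intro hxB
        obtain ⟨hxE, hxC⟩ := hBE hxB
        refine ⟨⟨hxE, fun hxD' => ?_⟩, hxC⟩
        have h3 : x ∈ D' ∩ (M.E \ C) := ⟨hxD', hxE, hxC⟩
        rw [hint, hDdef] at h3
        exact h3.2 hxB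
      · rintro ⟨⟨hxE, hxD'⟩, hxC⟩
        by_contra hxB
        have h3 : x ∈ D := by rw [hDdef]; exact ⟨⟨hxE, hxC⟩, hxB⟩
        exact hxD' (hDD' h3)
  · rintro ⟨B₀, hB₀, hBasis, rfl⟩
    have h1 := (hB₀.inter_isBasis_iff_compl_inter_isBasis_dual hC).mp hBasis
    have h2 : (M.E \ B₀) ∩ (M.E \ C) = (M.E \ C) \ (B₀ \ C) := by
      ext x; simp only [mem_inter_iff, mem_diff]; tauto
    rw [h2] at h1
    exact ⟨h1, diff_subset_diff_left hB₀.subset_ground⟩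

end MyAux

namespace MyAux
variable {M : Matroid α} {B C D I X Y : Set α}

lemma con_indep_iff (hC : C ⊆ M.E) :
    (M.con C).Indep I ↔ I ⊆ M.E \ C ∧ ∃ I₀, M.IsBasis I₀ C ∧ M.Indep (I ∪ I₀) := by
  constructor
  · intro hI
    obtain ⟨B, hB, hIB⟩ := hI.exists_isBase_superset
    obtain ⟨B₀, hB₀, hBasis, rfl⟩ := (con_base_iff hC).mp hB
    refine ⟨hIB.trans (diff_subset_diff_left hB₀.subset_ground), B₀ ∩ C, hBasis, ?_⟩
    exact hB₀.indep.subset (union_subset (hIB.trans diff_subset) inter_subset_left)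
  · rintro ⟨hIE, I₀, hI₀, hInd⟩
    obtain ⟨B₀, hB₀, hIB₀⟩ := hInd.exists_isBase_superset
    have hB₀C : B₀ ∩ C = I₀ :=
      (hI₀.eq_of_subset_indep (hB₀.indep.subset inter_subset_left)
        (subset_inter (subset_union_right.trans hIB₀) hI₀.subset) inter_subset_right).symm
    have hBase : (M.con C).IsBase (B₀ \ C) :=
      (con_base_iff hC).mpr ⟨B₀, hB₀, hB₀C ▸ hI₀, rfl⟩
    exact hBase.indep.subset (subset_diff.mpr ⟨subset_union_left.trans hIB₀,
      disjoint_sdiff_left.mono_left hIE⟩)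

lemma del_basis_iff : (M.del D).IsBasis I X ↔ M.IsBasis I X ∧ X ⊆ M.E \ D :=
  Matroid.isBasis_restrict_iff diff_subset

lemma del_con_comm (hC : C ⊆ M.E) (hD : D ⊆ M.E) (hCD : Disjoint C D) :
    (M.con C).del D = (M.del D).con C := by
  have hCdel : C ⊆ (M.del D).E := subset_diff.mpr ⟨hC, hCD⟩
  refine Matroid.ext_indep (by rw [del_ground, con_ground, con_ground,
    del_ground, diff_diff_comm]) (fun I hIE => ?_)
  rw [del_ground, con_ground] at hIE
  rw [del_indep_iff, con_indep_iff hC, con_indep_iff hCdel, con_ground, del_ground]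
  simp only [del_indep_iff, del_basis_iff, del_ground]
  constructor
  · rintro ⟨⟨hI1, I₀, hI₀, hInd⟩, hI2⟩
    have hIED : I ⊆ M.E \ D := fun x hx => ⟨(hIE hx).1.1, (hIE hx).2⟩
    have hI₀D : I₀ ⊆ M.E \ D := hI₀.subset.trans hCdel
    exact ⟨fun x hx => ⟨hIED hx, (hIE hx).1.2⟩, I₀, ⟨hI₀, hCdel⟩,
      hInd, union_subset hIED hI₀D⟩
  · rintro ⟨hI1, I₀, hI₀, hInd⟩
    have h1 : I ⊆ M.E \ C := fun x hx => ⟨(hI1 hx).1.1, (hI1 hx).2⟩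
    exact ⟨⟨h1, I₀, hI₀.1, hInd.1⟩, fun x hx => ⟨h1 hx, (hI1 hx).1.2⟩⟩

end MyAux

namespace MyAux

variable {M : Matroid α} {C D I I₀ : Set α} {𝔽 : Type} [Field 𝔽] {n : ℕ}

lemma unionFam_iff_sumElim {s t : Set α} (H : Disjoint s t) (f : α → (Fin n → 𝔽)) :
    LinearIndependent 𝔽 (fun x : ↥(s ∪ t) => f x) ↔
      LinearIndependent 𝔽 (Sum.elim (fun x : s => f x) (fun x : t => f x)) := by
  classical
  refine (linearIndependent_equiv' (Equiv.Set.union H).symm ?_).symm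
  funext x
  rcases x with x | x
  · simp [Equiv.Set.union_symm_apply_left]
  · simp [Equiv.Set.union_symm_apply_right]

lemma span_image_basis {φ : α → (Fin n → 𝔽)}
    (hφ : ∀ I : Set α, M.Indep I ↔ I ⊆ M.E ∧ LinearIndependent 𝔽 (fun x : I => φ x))
    (hC : C ⊆ M.E) (hI₀ : M.IsBasis I₀ C) :
    Submodule.span 𝔽 (φ '' I₀) = Submodule.span 𝔽 (φ '' C) := by
  refine le_antisymm (Submodule.span_mono (image_mono hI₀.subset)) ?_
  rw [Submodule.span_le]
  rintro _ ⟨c, hc, rfl⟩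
  by_cases hcI₀ : c ∈ I₀
  · exact Submodule.subset_span (mem_image_of_mem φ hcI₀)
  · have hdep := hI₀.insert_dep ⟨hc, hcI₀⟩
    have hliI₀ : LinearIndependent 𝔽 (fun x : I₀ => φ x) := ((hφ I₀).mp hI₀.indep).2
    have hnli : ¬ LinearIndependent 𝔽 (fun x : (insert c I₀ : Set α) => φ x) := by
      intro hli
      exact hdep.not_indep ((hφ _).mpr
        ⟨insert_subset (hC hc) (hI₀.subset.trans hC), hli⟩)
    rw [show LinearIndependent 𝔽 (fun x : (insert c I₀ : Set α) => φ x) ↔ _ from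
      linearIndepOn_insert hcI₀] at hnli
    push_neg at hnli
    exact hnli hliI₀

lemma isRepBy_con (h : M.IsRepBy 𝔽) (hC : C ⊆ M.E) : (M.con C).IsRepBy 𝔽 := by
  classical
  obtain ⟨n, φ, hφ⟩ := h
  set W : Submodule 𝔽 (Fin n → 𝔽) := Submodule.span 𝔽 (φ '' C) with hW
  set m := Module.finrank 𝔽 ((Fin n → 𝔽) ⧸ W) with hm
  set b : Module.Basis (Fin m) 𝔽 ((Fin n → 𝔽) ⧸ W) := Module.finBasis 𝔽 _ with hb
  refine ⟨m, fun a => b.equivFun (W.mkQ (φ a)), fun I => ?_⟩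
  rw [con_indep_iff hC, con_ground]
  have hmkQ : ∀ J : Set α, LinearIndependent 𝔽 (fun x : J => b.equivFun (W.mkQ (φ x))) ↔
      LinearIndependent 𝔽 (fun x : J => W.mkQ (φ x)) := by
    intro J
    constructor
    · intro hli
      exact hli.of_comp b.equivFun.toLinearMap
    · intro hli
      exact hli.map' b.equivFun.toLinearMap b.equivFun.ker
  constructor
  · rintro ⟨hIE, I₀, hI₀, hInd⟩
    refine ⟨hIE, (hmkQ I).mpr ?_⟩
    have hIdisj : Disjoint I I₀ :=
      Disjoint.mono_left hIE (disjoint_sdiff_left.mono_right hI₀.subset)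
    have hli := ((hφ _).mp hInd).2
    rw [unionFam_iff_sumElim hIdisj, linearIndependent_sum] at hli
    obtain ⟨hliI, hliI₀, hdisj⟩ := hli
    have h1 : range (Sum.elim (fun x : I => φ x) (fun x : I₀ => φ x) ∘ Sum.inl) = φ '' I := by
      ext v; simp
    have h2 : range (Sum.elim (fun x : I => φ x) (fun x : I₀ => φ x) ∘ Sum.inr) = φ '' I₀ := by
      ext v; simp
    rw [h1, h2] at hdisj
    refine LinearIndependent.map hliI (f := W.mkQ) ?_
    rw [Submodule.ker_mkQ, hW, ← span_image_basis hφ hC hI₀, h1]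
    exact hdisj
  · rintro ⟨hIE, hli⟩
    rw [hmkQ I] at hli
    obtain ⟨I₀, hI₀⟩ := M.exists_isBasis C hC
    refine ⟨hIE, I₀, hI₀, ?_⟩
    have hI₀disj : Disjoint I₀ I :=
      Disjoint.mono_right hIE (disjoint_sdiff_right.mono_left hI₀.subset)
    rw [union_comm]
    refine (hφ _).mpr ⟨union_subset (hI₀.subset.trans hC) (hIE.trans diff_subset), ?_⟩
    rw [unionFam_iff_sumElim hI₀disj]
    have hliI₀ : LinearIndependent 𝔽 (fun x : I₀ => φ x) := ((hφ _).mp hI₀.indep).2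
    have hmem : ∀ x : I₀, φ x ∈ W :=
      fun x => Submodule.subset_span (mem_image_of_mem φ (hI₀.subset x.2))
    have hf : LinearIndependent 𝔽 (fun x : I₀ => (⟨φ x, hmem x⟩ : W)) := by
      apply LinearIndependent.of_comp W.subtype
      exact hliI₀
    have := LinearIndependent.sumElim_of_quotient hf (fun x : I => φ x) hli
    exact this

end MyAux

namespace MyAux
variable {M : Matroid α} {C D I X Y : Set α} {𝔽 : Type} [Field 𝔽]

lemma isRepBy_del (h : M.IsRepBy 𝔽) (D : Set α) : (M.del D).IsRepBy 𝔽 := by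
  obtain ⟨n, φ, hφ⟩ := h
  refine ⟨n, φ, fun I => ?_⟩
  rw [del_indep_iff, hφ I, del_ground]
  constructor
  · rintro ⟨⟨-, hli⟩, hIE⟩
    exact ⟨hIE, hli⟩
  · rintro ⟨hIE, hli⟩
    exact ⟨⟨hIE.trans diff_subset, hli⟩, hIE⟩

lemma isRegular_del (h : M.IsRegular) (D : Set α) : (M.del D).IsRegular :=
  fun 𝔽 _ => isRepBy_del (h 𝔽) D

lemma isRegular_con (h : M.IsRegular) (hC : C ⊆ M.E) : (M.con C).IsRegular :=
  fun 𝔽 _ => isRepBy_con (h 𝔽) hC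

end MyAux


open MyAux

/-- a non-regular minor obtained by deleting and contracting only
elements outside a set R of regular elements keeps every element of R regular. -/
theorem regularElems_of_minor (M : Matroid α) (hM : ¬ M.IsRegular)
    (R X Y : Set α) (hR : ∀ r ∈ R, M.IsRegularElem r)
    (hXY : Disjoint X Y) (hXR : Disjoint X R) (hYR : Disjoint Y R)
    (hXE : X ⊆ M.E) (hYE : Y ⊆ M.E)
    (hN : ¬ ((M.del X).con Y).IsRegular) :
    ∀ r ∈ R, ((M.del X).con Y).IsRegularElem r := by
  intro r hr
  have hrE : r ∈ M.E := by
    by_contra hrE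
    refine hM ?_
    have := (hR r hr).1
    rwa [del_eq_self (disjoint_singleton_right.mpr hrE)] at this
  have hrX : r ∉ X := fun h => disjoint_left.mp hXR h hr
  have hrY : r ∉ Y := fun h => disjoint_left.mp hYR h hr
  have hYX : Y ⊆ (M.del X).E := subset_diff.mpr ⟨hYE, hXY.symm⟩
  have hrXE : ({r} : Set α) ⊆ (M.del X).E :=
    singleton_subset_iff.mpr ⟨hrE, hrX⟩
  constructor
  · -- deletion of r
    have e1 : ((M.del X).con Y).del {r} = ((M.del {r}).del X).con Y := by
      rw [del_con_comm hYX hrXE (disjoint_singleton_right.mpr hrY), del_del, union_comm,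
        ← del_del]
    rw [e1]
    refine isRegular_con (isRegular_del (hR r hr).1 X) ?_
    refine subset_diff.mpr ⟨subset_diff.mpr ⟨hYE, disjoint_singleton_right.mpr hrY⟩, hXY.symm⟩
  · -- contraction of r
    have e2 : ((M.del X).con Y).con {r} = ((M.con {r}).del X).con Y := by
      rw [con_con, union_comm, ← con_con,
        del_con_comm (singleton_subset_iff.mpr hrE) hXE
          (disjoint_singleton_left.mpr hrX)]
    rw [e2]
    refine isRegular_con (isRegular_del (hR r hr).2 X) ?_
    have : (M.con {r}).E = M.E \ {r} := con_ground M {r}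
    rw [del_ground, this]
    exact subset_diff.mpr ⟨subset_diff.mpr ⟨hYE, disjoint_singleton_right.mpr hrY⟩, hXY.symm⟩
end

section
/- Let M be a 3-connected non-regular binary matroid with a triangle T′ = {e, e′, t} and a triad T* = {e, e′, f} such that e is a regular element of M. Then e′ is also a regular element of M, i.e., T′ ∩ T* ⊆ R(M). -/
open Matroid Set

variable {α β : Type*}

/-! ### Auxiliary lemmas -/

section Aux

variable {M : Matroid α} {I : Set α}

lemma Matroid.del_ground (M : Matroid α) (D : Set α) : (M.del D).E = M.E \ D := rfl

lemma Matroid.con_ground (M : Matroid α) (C : Set α) : (M.con C).E = M.E \ C := rfl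

lemma Matroid.del_indep_iff {D : Set α} : (M.del D).Indep I ↔ M.Indep I ∧ I ⊆ M.E \ D :=
  Matroid.restrict_indep_iff

instance Matroid.del_finite [M.Finite] {D : Set α} : (M.del D).Finite :=
  ⟨M.ground_finite.subset diff_subset⟩

instance Matroid.con_finite [M.Finite] {C : Set α} : (M.con C).Finite :=
  ⟨M.ground_finite.subset diff_subset⟩

/-- Independence in the contraction of a single non-loop. -/
lemma Matroid.con_indep_iff {e' : α} (he' : M.Indep {e'}) {I : Set α} :
    (M.con {e'}).Indep I ↔ I ⊆ M.E \ {e'} ∧ M.Indep (insert e' I) := by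
  rw [Matroid.con, Matroid.dual_indep_iff_exists']
  have hNE : (M✶.del {e'}).E = M.E \ {e'} := rfl
  rw [hNE]
  constructor
  · rintro ⟨hIE, B, hB, hdis⟩
    rw [isBase_iff_maximal_indep] at hB
    obtain ⟨hBi, hBmax⟩ := hB
    rw [Matroid.del_indep_iff, Matroid.dual_indep_iff_exists'] at hBi
    obtain ⟨⟨hBE, B₂, hB₂, hBB₂⟩, hBE'⟩ := hBi
    obtain ⟨B₁, hB₁, he'B₁, hB₁sub⟩ := he'.exists_isBase_subset_union_isBase hB₂
    have he'B₁' : e' ∈ B₁ := he'B₁ rfl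
    have hBB₁ : Disjoint B B₁ := by
      refine Set.disjoint_left.2 fun z hzB hzB₁ => ?_
      rcases hB₁sub hzB₁ with hz | hz
      · exact ((hBE' hzB).2 : z ∉ ({e'} : Set α)) hz
      · exact (Set.disjoint_left.1 hBB₂) hzB hz
    have hJi : (M✶.del {e'}).Indep (M.E \ B₁) := by
      rw [Matroid.del_indep_iff, Matroid.dual_indep_iff_exists']
      refine ⟨⟨diff_subset, B₁, hB₁, disjoint_sdiff_left⟩, ?_⟩
      rw [show M✶.E \ ({e'} : Set α) = M.E \ {e'} from rfl]
      exact fun z hz => ⟨hz.1, fun h => hz.2 (h ▸ he'B₁')⟩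
    have hBsub : B ⊆ M.E \ B₁ := fun z hz =>
      ⟨(hBE' hz).1, fun h => (Set.disjoint_left.1 hBB₁) hz h⟩
    have heq : M.E \ B₁ = B := (hBmax hJi hBsub).antisymm hBsub
    have hIB₁ : I ⊆ B₁ := by
      intro z hz
      by_contra hzB₁
      have : z ∈ M.E \ B₁ := ⟨(hIE hz).1, hzB₁⟩
      rw [heq] at this
      exact (Set.disjoint_left.1 hdis) hz this
    exact ⟨hIE, hB₁.indep.subset (insert_subset he'B₁' hIB₁)⟩
  · rintro ⟨hIE, hins⟩
    obtain ⟨B₁, hB₁, hsub⟩ := hins.exists_isBase_superset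
    have he'B₁ : e' ∈ B₁ := hsub (mem_insert _ _)
    refine ⟨hIE, M.E \ B₁, ?_, ?_⟩
    · rw [isBase_iff_maximal_indep]
      constructor
      · rw [Matroid.del_indep_iff, Matroid.dual_indep_iff_exists']
        refine ⟨⟨diff_subset, B₁, hB₁, disjoint_sdiff_left⟩, ?_⟩
        rw [show M✶.E \ ({e'} : Set α) = M.E \ {e'} from rfl]
        exact fun z hz => ⟨hz.1, fun h => hz.2 (h ▸ he'B₁)⟩
      · intro J hJ hBJ
        rw [Matroid.del_indep_iff, Matroid.dual_indep_iff_exists'] at hJ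
        obtain ⟨⟨hJE, B₂, hB₂, hJB₂⟩, hJE'⟩ := hJ
        have hB₂B₁ : B₂ ⊆ B₁ := by
          intro z hz
          by_contra hzB₁
          have : z ∈ M.E \ B₁ := ⟨hB₂.subset_ground hz, hzB₁⟩
          exact (Set.disjoint_right.1 hJB₂) hz (hBJ this)
        have : B₂ = B₁ := hB₂.eq_of_subset_isBase hB₁ hB₂B₁
        subst this
        exact fun z hz => ⟨hJE hz, fun h => (Set.disjoint_left.1 hJB₂) hz h⟩
    · exact Set.disjoint_left.2 fun z hz h =>
        h.2 (hsub (mem_insert_of_mem _ hz))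

/-- Deletion and contraction of distinct single elements commute. -/
lemma Matroid.del_con_comm {e e' : α} (hee' : e ≠ e') (he' : M.Indep {e'}) :
    (M.con {e'}).del {e} = (M.del {e}).con {e'} := by
  have he'd : (M.del {e}).Indep {e'} := by
    rw [Matroid.del_indep_iff]
    exact ⟨he', singleton_subset_iff.2 ⟨he'.subset_ground rfl, fun h => hee' (h.symm)⟩⟩
  refine Matroid.ext_indep ?_ fun I hI => ?_
  · rw [Matroid.del_ground, Matroid.con_ground, Matroid.con_ground, Matroid.del_ground,
      diff_diff_comm]
  · rw [Matroid.del_ground, Matroid.con_ground] at hI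
    rw [Matroid.del_indep_iff, Matroid.con_indep_iff he', Matroid.con_indep_iff he'd,
      Matroid.del_indep_iff, Matroid.del_ground, Matroid.con_ground]
    constructor
    · rintro ⟨⟨hIE, hins⟩, hIe⟩
      refine ⟨fun z hz => ⟨⟨(hIE hz).1, (hIe hz).2⟩, (hIE hz).2⟩,
        hins, insert_subset ⟨he'.subset_ground rfl, fun h => hee' h.symm⟩
          fun z hz => ⟨(hIE hz).1, (hIe hz).2⟩⟩
    · rintro ⟨hIE, hins, _⟩
      exact ⟨⟨fun z hz => ⟨(hIE hz).1.1, (hIE hz).2⟩, hins⟩,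
        fun z hz => ⟨⟨(hIE hz).1.1, (hIE hz).2⟩, (hIE hz).1.2⟩⟩

section Rep

variable {M : Matroid α} {I : Set α} {𝔽 : Type} [Field 𝔽]

lemma Matroid.IsRepBy.del (h : M.IsRepBy 𝔽) (D : Set α) : (M.del D).IsRepBy 𝔽 := by
  obtain ⟨n, φ, hφ⟩ := h
  refine ⟨n, φ, fun I => ?_⟩
  rw [Matroid.del_indep_iff, hφ, Matroid.del_ground]
  constructor
  · rintro ⟨⟨hIE, hli⟩, hID⟩; exact ⟨hID, hli⟩
  · rintro ⟨hID, hli⟩; exact ⟨⟨fun z hz => (hID hz).1, hli⟩, hID⟩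

lemma Matroid.IsRegular.del (h : M.IsRegular) (D : Set α) : (M.del D).IsRegular :=
  fun 𝔽 _ => (h 𝔽).del D

open scoped Matrix

/-- Columns of `A` are linearly independent iff the rows of `A` span everything.
This is row rank = column rank. -/
lemma cols_linearIndependent_iff_rows_span {m : ℕ} {ι : Type*} [Fintype ι]
    (A : Matrix (Fin m) ι 𝔽) :
    LinearIndependent 𝔽 (fun x : ι => Aᵀ x) ↔ LinearMap.range (Matrix.mulVecLin Aᵀ) = ⊤ := by
  classical
  have hdim : Module.finrank 𝔽 (ι → 𝔽) = Fintype.card ι := Module.finrank_pi 𝔽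
  have h1 : LinearIndependent 𝔽 (fun x : ι => Aᵀ x) ↔ LinearMap.ker A.mulVecLin = ⊥ := by
    rw [Fintype.linearIndependent_iff, LinearMap.ker_eq_bot']
    have hmv : ∀ g : ι → 𝔽, A.mulVecLin g = ∑ x : ι, g x • Aᵀ x := by
      intro g
      funext i
      rw [Matrix.mulVecLin_apply]
      simp only [Finset.sum_apply, Pi.smul_apply, Matrix.transpose_apply, smul_eq_mul,
        Matrix.mulVec, dotProduct]
      exact Finset.sum_congr rfl fun x _ => mul_comm _ _
    constructor
    · intro h g hg
      funext x
      exact h g (by rw [← hmv]; exact hg) x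
    · intro h g hg x
      have := h g (by rw [hmv]; exact hg)
      exact congrFun this x
  have h2 : LinearMap.ker A.mulVecLin = ⊥ ↔ A.rank = Fintype.card ι := by
    have hrn := LinearMap.finrank_range_add_finrank_ker A.mulVecLin
    rw [hdim] at hrn
    constructor
    · intro h
      rw [h, finrank_bot 𝔽 _, Nat.add_zero] at hrn
      exact hrn
    · intro h
      rw [← Submodule.finrank_eq_zero (R := 𝔽)]
      rw [Matrix.rank] at h
      omega
  have h3 : LinearMap.range (Matrix.mulVecLin Aᵀ) = ⊤ ↔ Matrix.rank Aᵀ = Fintype.card ι := by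
    constructor
    · intro h
      rw [Matrix.rank, h, finrank_top, hdim]
    · intro h
      apply Submodule.eq_top_of_finrank_eq
      rw [hdim]
      exact h
  rw [h1, h2, h3, Matrix.rank_transpose]

/-- The dual of a finite representable matroid is representable. -/
lemma Matroid.IsRepBy.dual [M.Finite] (h : M.IsRepBy 𝔽) : M✶.IsRepBy 𝔽 := by
  classical
  obtain ⟨n, φ, hφ⟩ := h
  have hE : M.E.Finite := M.ground_finite
  haveI : Fintype ↥M.E := hE.fintype
  set Φ : (↥M.E → 𝔽) →ₗ[𝔽] (Fin n → 𝔽) :=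
    Fintype.linearCombination 𝔽 (fun z : ↥M.E => φ z) with hPhi
  set W := LinearMap.ker Φ with hW
  set m := Module.finrank 𝔽 ↥W with hm
  set b := Module.finBasis 𝔽 ↥W with hb
  set ψ : α → Fin m → 𝔽 :=
    fun a => if ha : a ∈ M.E then (fun i => ((b i : ↥M.E → 𝔽) ⟨a, ha⟩)) else 0 with hpsi
  refine ⟨m, ψ, fun I => ?_⟩
  by_cases hIE : I ⊆ M.E
  swap
  · constructor
    · intro h; exact absurd h.subset_ground hIE
    · rintro ⟨h1, -⟩; exact absurd h1 hIE
  haveI : Fintype ↥I := (hE.subset hIE).fintype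
  set A : Matrix (Fin m) ↥I 𝔽 :=
    Matrix.of (fun i (x : ↥I) => (b i : ↥M.E → 𝔽) ⟨x.1, hIE x.2⟩) with hA
  have hfam : (fun x : ↥I => ψ (x : α)) = (fun x : ↥I => Aᵀ x) := by
    funext x
    simp only [hpsi]
    rw [dif_pos (hIE x.2)]
    rfl
  let evI : ↥W →ₗ[𝔽] (↥I → 𝔽) :=
    { toFun := fun w x => (w : ↥M.E → 𝔽) ⟨x.1, hIE x.2⟩
      map_add' := fun u v => rfl
      map_smul' := fun c u => rfl }
  have hrange : LinearMap.range evI = LinearMap.range (Matrix.mulVecLin Aᵀ) := by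
    rw [Matrix.range_mulVecLin, Matrix.col, Matrix.transpose_transpose]
    rw [LinearMap.range_eq_map, ← b.span_eq, Submodule.map_span, ← Set.range_comp]
    rfl
  have hsplit : ∀ v : ↥M.E → 𝔽, ∑ z : ↥M.E, v z • φ z =
      (∑ x : ↥I, v ⟨x.1, hIE x.2⟩ • φ x) +
        ∑ z : ↥(M.E \ I), v ⟨z.1, z.2.1⟩ • φ z := by
    intro v
    rw [← Equiv.sum_comp (Equiv.Set.sumDiffSubset hIE)
      (fun z : ↥M.E => v z • φ (z : α)), Fintype.sum_sum_type]
    rfl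
  have hsurj : LinearMap.range evI = ⊤ ↔
      ∀ y ∈ I, φ y ∈ Submodule.span 𝔽 (φ '' (M.E \ I)) := by
    rw [LinearMap.range_eq_top]
    constructor
    · intro hs y hy
      obtain ⟨w, hw⟩ := hs (fun x => if (x : α) = y then 1 else 0)
      have hwker : ∑ z : ↥M.E, (w : ↥M.E → 𝔽) z • φ z = 0 := w.2
      rw [hsplit] at hwker
      have hSI : (∑ x : ↥I, (w : ↥M.E → 𝔽) ⟨x.1, hIE x.2⟩ • φ x) = φ y := by
        have hcoef : ∀ x : ↥I, (w : ↥M.E → 𝔽) ⟨x.1, hIE x.2⟩ =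
            if x = (⟨y, hy⟩ : ↥I) then (1 : 𝔽) else 0 := by
          intro x
          have hx := congrFun hw x
          simp only [evI, LinearMap.coe_mk, AddHom.coe_mk] at hx
          rw [hx]
          congr 1
          simp [Subtype.ext_iff]
        rw [Finset.sum_congr rfl (fun x _ => by rw [hcoef x])]
        simp
      rw [hSI] at hwker
      have : φ y = -∑ z : ↥(M.E \ I), (w : ↥M.E → 𝔽) ⟨z.1, z.2.1⟩ • φ z :=
        eq_neg_of_add_eq_zero_left hwker
      rw [this]
      exact Submodule.neg_mem _ (Submodule.sum_mem _ fun z _ =>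
        Submodule.smul_mem _ _ (Submodule.subset_span ⟨z.1, z.2, rfl⟩))
    · intro hs u
      have hv : (∑ x : ↥I, u x • φ x) ∈
          Submodule.span 𝔽 (Set.range (fun z : ↥(M.E \ I) => φ (z : α))) := by
        rw [← Set.image_eq_range φ (M.E \ I)]
        exact Submodule.sum_mem _ fun x _ => Submodule.smul_mem _ _ (hs x.1 x.2)
      obtain ⟨c, hc⟩ := Submodule.mem_span_range_iff_exists_fun 𝔽 |>.1 hv
      refine ⟨⟨fun z => if h : (z : α) ∈ I then u ⟨z.1, h⟩ else -c ⟨z.1, ⟨z.2, h⟩⟩, ?_⟩, ?_⟩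
      · show Φ _ = 0
        rw [hPhi]
        rw [Fintype.linearCombination_apply, hsplit]
        have e1 : (∑ x : ↥I, (if h : (x : α) ∈ I then u ⟨x.1, h⟩
            else -c ⟨x.1, ⟨hIE x.2, h⟩⟩) • φ x) = ∑ x : ↥I, u x • φ x := by
          apply Finset.sum_congr rfl
          intro x _
          rw [dif_pos x.2]
        have e2 : (∑ z : ↥(M.E \ I), (if h : (z : α) ∈ I then u ⟨z.1, h⟩
            else -c ⟨z.1, ⟨z.2.1, h⟩⟩) • φ z) = -∑ z : ↥(M.E \ I), c z • φ z := by
          rw [← Finset.sum_neg_distrib]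
          apply Finset.sum_congr rfl
          intro z _
          rw [dif_neg z.2.2, neg_smul]
        rw [e1, e2, hc, add_neg_cancel]
      · funext x
        show (if h : (x : α) ∈ I then u ⟨x.1, h⟩ else _) = u x
        rw [dif_pos x.2]
  have hmat : (M✶.Indep I) ↔ ∀ y ∈ I, φ y ∈ Submodule.span 𝔽 (φ '' (M.E \ I)) := by
    rw [Matroid.dual_indep_iff_exists']
    constructor
    · rintro ⟨-, B, hB, hdis⟩ y hy
      have hBEI : B ⊆ M.E \ I := fun z hz =>
        ⟨hB.subset_ground hz, fun h => (Set.disjoint_right.1 hdis) hz h⟩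
      have hspan : ∀ z ∈ M.E, φ z ∈ Submodule.span 𝔽 (φ '' B) := by
        intro z hzE
        by_cases hzB : z ∈ B
        · exact Submodule.subset_span ⟨z, hzB, rfl⟩
        · by_contra hns
          have hBli : LinearIndependent 𝔽 (fun w : ↥B => φ (w : α)) :=
            ((hφ B).1 hB.indep).2
          have hins : LinearIndependent 𝔽 (fun w : ↥(insert z B) => φ (w : α)) :=
            (linearIndepOn_insert (f := φ) hzB).2 ⟨hBli, hns⟩
          exact (hB.insert_dep ⟨hzE, hzB⟩).not_indep
            ((hφ _).2 ⟨insert_subset hzE hB.subset_ground, hins⟩)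
      exact Submodule.span_mono (Set.image_mono (f := φ) hBEI) (hspan y (hIE hy))
    · intro hs
      obtain ⟨B₀, hB₀⟩ := M.exists_isBasis (M.E \ I) diff_subset
      have hB₀li : LinearIndependent 𝔽 (fun w : ↥B₀ => φ (w : α)) :=
        ((hφ B₀).1 hB₀.indep).2
      have hsub : ∀ z ∈ M.E \ I, φ z ∈ Submodule.span 𝔽 (φ '' B₀) := by
        intro z hz
        by_cases hzB : z ∈ B₀
        · exact Submodule.subset_span ⟨z, hzB, rfl⟩
        · by_contra hns
          have hins : LinearIndependent 𝔽 (fun w : ↥(insert z B₀) => φ (w : α)) :=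
            (linearIndepOn_insert (f := φ) hzB).2 ⟨hB₀li, hns⟩
          exact (hB₀.insert_dep ⟨hz, hzB⟩).not_indep
            ((hφ _).2 ⟨insert_subset hz.1 hB₀.indep.subset_ground, hins⟩)
      have hspanB₀ : ∀ z ∈ M.E, φ z ∈ Submodule.span 𝔽 (φ '' B₀) := by
        intro z hzE
        by_cases hzI : z ∈ I
        · refine Submodule.span_le.2 ?_ (hs z hzI)
          rintro _ ⟨w, hw, rfl⟩
          exact hsub w hw
        · exact hsub z ⟨hzE, hzI⟩
      have hbase : M.IsBase B₀ := by
        rw [isBase_iff_maximal_indep]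
        refine ⟨hB₀.indep, fun J hJ hBJ => ?_⟩
        intro y hyJ
        by_contra hyB
        have hJli : LinearIndependent 𝔽 (fun w : ↥J => φ (w : α)) := ((hφ J).1 hJ).2
        have h1 : φ y ∈ Submodule.span 𝔽 (φ '' (J \ {y})) := by
          refine Submodule.span_mono (Set.image_mono (f := φ) ?_) (hspanB₀ y (hJ.subset_ground hyJ))
          exact fun z hz => ⟨hBJ hz, fun h => hyB (h ▸ hz)⟩
        have himg : (fun w : ↥J => φ (w : α)) '' {w : ↥J | (w : α) ∈ J \ {y}} =
            φ '' (J \ {y}) := by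
          ext v
          constructor
          · rintro ⟨w, hw, rfl⟩; exact ⟨w, hw, rfl⟩
          · rintro ⟨z, hz, rfl⟩; exact ⟨⟨z, hz.1⟩, hz, rfl⟩
        have h2 := hJli.notMem_span_image
          (s := {w : ↥J | (w : α) ∈ J \ {y}}) (x := ⟨y, hyJ⟩)
          (by simp)
        rw [himg] at h2
        exact h2 h1
      refine ⟨hIE, B₀, hbase, ?_⟩
      exact (Set.disjoint_of_subset_right hB₀.subset disjoint_sdiff_right)
  have hiff : LinearIndependent 𝔽 (fun x : ↥I => ψ (x : α)) ↔
      ∀ y ∈ I, φ y ∈ Submodule.span 𝔽 (φ '' (M.E \ I)) := by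
    rw [hfam, cols_linearIndependent_iff_rows_span, ← hrange, hsurj]
  rw [hmat, ← hiff]
  exact (and_iff_right hIE).symm

lemma Matroid.IsRegular.dual [M.Finite] (h : M.IsRegular) : M✶.IsRegular :=
  fun 𝔽 _ => (h 𝔽).dual

lemma Matroid.IsRegular.con [M.Finite] (h : M.IsRegular) (C : Set α) :
    (M.con C).IsRegular := by
  rw [Matroid.con]
  exact ((h.dual).del C).dual

end Rep

section Parallel

variable {Q : Matroid α}

/-- If `{a,b}` is dependent, we can swap `a` for `b` in any independent set. -/
lemma swap_indep {a b : α} {J : Set α} (hJ : Q.Indep J) (haJ : a ∈ J)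
    (hbi : Q.Indep {b}) (hdep : ¬ Q.Indep {a, b}) :
    Q.Indep (insert b (J \ {a})) := by
  have hbE : b ∈ Q.E := hbi.subset_ground rfl
  have hJs : Q.Indep (J \ {a}) := hJ.subset diff_subset
  by_contra hcon
  have hbcl : b ∈ Q.closure (J \ {a}) := by
    rw [hJs.mem_closure_iff]
    exact Or.inl ⟨hcon, insert_subset hbE (diff_subset.trans hJ.subset_ground)⟩
  have hacl : a ∈ Q.closure {b} := by
    rw [hbi.mem_closure_iff]
    exact Or.inl ⟨hdep, insert_subset (hJ.subset_ground haJ) (singleton_subset_iff.2 hbE)⟩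
  have hsub : Q.closure {b} ⊆ Q.closure (J \ {a}) :=
    calc Q.closure {b} ⊆ Q.closure (Q.closure (J \ {a})) :=
          Q.closure_subset_closure (singleton_subset_iff.2 hbcl)
      _ = Q.closure (J \ {a}) := Q.closure_closure _
  have hacl' : a ∈ Q.closure (J \ {a}) := hsub hacl
  rw [hJs.mem_closure_iff] at hacl'
  rcases hacl' with h | h
  · rw [insert_diff_singleton, insert_eq_of_mem haJ] at h
    exact h.not_indep hJ
  · exact h.2 rfl

/-- The swap bijection between `I` (containing `e`) and `insert x (I \ {e})`. -/
def swapEquiv [DecidableEq α] {I I' : Set α} {e x : α}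
    (heI : e ∈ I) (hxI' : x ∈ I')
    (hIn : ∀ z : ↥I, (z : α) ≠ e → (z : α) ∈ I')
    (hI'n : ∀ z : ↥I', (z : α) ≠ x → (z : α) ∈ I)
    (hxI : x ∉ I) (heI' : e ∉ I') : ↥I ≃ ↥I' where
  toFun z := if h : (z : α) = e then ⟨x, hxI'⟩ else ⟨z, hIn z h⟩
  invFun z := if h : (z : α) = x then ⟨e, heI⟩ else ⟨z, hI'n z h⟩
  left_inv z := by
    rcases eq_or_ne (z : α) e with h | h
    · simp only [dif_pos h]
      rw [dif_pos trivial]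
      exact Subtype.ext h.symm
    · simp only [dif_neg h]
      rw [dif_neg (show (z : α) ≠ x from fun hc => hxI (hc ▸ z.2))]
  right_inv z := by
    rcases eq_or_ne (z : α) x with h | h
    · simp only [dif_pos h]
      rw [dif_pos trivial]
      exact Subtype.ext h.symm
    · simp only [dif_neg h]
      rw [dif_neg (show (z : α) ≠ e from fun hc => heI' (hc ▸ z.2))]

/-- Extending a representation by an element parallel to an existing one. -/
lemma par_ext {e x : α} (hex : e ≠ x) (heE : e ∈ Q.E)
    (hei : Q.Indep {e}) (hxi : Q.Indep {x}) (hdep : ¬ Q.Indep {e, x})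
    {𝔽 : Type} [Field 𝔽] (h : (Q.del {e}).IsRepBy 𝔽) : Q.IsRepBy 𝔽 := by
  classical
  obtain ⟨n, φ, hφ⟩ := h
  have hxE : x ∈ Q.E := hxi.subset_ground rfl
  have key : ∀ J, J ⊆ Q.E \ {e} →
      (Q.Indep J ↔ LinearIndependent 𝔽 (fun z : J => φ z)) := by
    intro J hJE
    have h1 : (Q.del {e}).Indep J ↔ Q.Indep J ∧ J ⊆ Q.E \ {e} := Matroid.del_indep_iff
    rw [hφ J, Matroid.del_ground] at h1
    constructor
    · intro hJ
      exact (h1.2 ⟨hJ, hJE⟩).2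
    · intro hli
      exact (h1.1 ⟨hJE, hli⟩).1
  refine ⟨n, fun a => if a = e then φ x else φ a, fun I => ?_⟩
  by_cases hIE : I ⊆ Q.E
  swap
  · exact ⟨fun h => absurd h.subset_ground hIE, fun h => absurd h.1 hIE⟩
  by_cases heI : e ∈ I
  · by_cases hxI : x ∈ I
    · constructor
      · intro h
        exact absurd (h.subset (pair_subset heI hxI)) hdep
      · rintro ⟨-, hli⟩
        have hvals : (if e = e then φ x else φ e) = (if x = e then φ x else φ x) := by
          rw [if_pos rfl, if_neg (show x ≠ e from fun h => hex h.symm)]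
        have := hli.injective
          (a₁ := ⟨e, heI⟩) (a₂ := ⟨x, hxI⟩) hvals
        exact (hex (congrArg Subtype.val this)).elim
    · -- e ∈ I, x ∉ I : swap e for x
      set I' : Set α := insert x (I \ {e}) with hI'
      have hxI' : x ∈ I' := mem_insert _ _
      have heI' : e ∉ I' := by
        rintro (h | h)
        · exact hex h
        · exact h.2 rfl
      have hI'E : I' ⊆ Q.E \ {e} := by
        rintro z (h | hz)
        · subst h
          exact ⟨hxE, fun hc => hex (mem_singleton_iff.1 hc).symm⟩
        · exact ⟨hIE hz.1, hz.2⟩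
      have hmi : Q.Indep I ↔ Q.Indep I' := by
        constructor
        · intro h
          exact swap_indep h heI hxi hdep
        · intro h
          have hswap := swap_indep h hxI' hei
            (fun hc => hdep (by rwa [pair_comm] at hc))
          rwa [hI', insert_diff_self_of_notMem (fun hc => hxI hc.1),
            insert_diff_singleton, insert_eq_of_mem heI] at hswap
      have hIn : ∀ z : ↥I, (z : α) ≠ e → (z : α) ∈ I' :=
        fun z h => mem_insert_of_mem _ ⟨z.2, h⟩
      have hI'n : ∀ z : ↥I', (z : α) ≠ x → (z : α) ∈ I := by
        intro z h
        rcases z.2 with h' | h'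
        · exact absurd h' h
        · exact h'.1
      have hcomp : (fun z : ↥I' => φ (z : α)) ∘ (swapEquiv heI hxI' hIn hI'n hxI heI') =
          (fun z : ↥I => if (z : α) = e then φ x else φ (z : α)) := by
        funext z
        rcases eq_or_ne (z : α) e with h | h
        · simp only [Function.comp_apply, swapEquiv, Equiv.coe_fn_mk, dif_pos h, if_pos h]
        · simp only [Function.comp_apply, swapEquiv, Equiv.coe_fn_mk, dif_neg h, if_neg h]
      have hLA := linearIndependent_equiv' (R := 𝔽)
        (swapEquiv heI hxI' hIn hI'n hxI heI') hcomp
      rw [hmi, key I' hI'E, and_iff_right hIE]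
      exact hLA.symm
  · have hIEe : I ⊆ Q.E \ {e} :=
      fun z hz => ⟨hIE hz, fun h => heI (mem_singleton_iff.1 h ▸ hz)⟩
    rw [key I hIEe, and_iff_right hIE]
    have hsame : (fun z : I => if (z : α) = e then φ x else φ (z : α)) =
        (fun z : I => φ (z : α)) := by
      funext z
      rw [if_neg (show (z:α) ≠ e from fun h => heI (h ▸ z.2))]
    rw [hsame]

end Parallel

section Step

/-- Key step: if `{e,e',x}` is a circuit of `P` and `P \\ e` is regular,
then `P / e'` is regular, since there `e` is parallel to `x`. -/
lemma step_con (P : Matroid α) [P.Finite] {e e' x : α} (hee' : e ≠ e') (hex : e ≠ x)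
    (he'x : e' ≠ x) (hC : P.IsCircuit' {e, e', x}) (hd : (P.del {e}).IsRegular) :
    (P.con {e'}).IsRegular := by
  have hsub : ({e, e', x} : Set α) ⊆ P.E := hC.1.subset_ground
  have heE : e ∈ P.E := hsub (by simp)
  have he'E : e' ∈ P.E := hsub (by simp)
  have hxE : x ∈ P.E := hsub (by simp)
  have hinde : ∀ D : Set α, D ⊆ {e, e', x} → e ∉ D → P.Indep D :=
    fun D hD heD => hC.2 D (lt_of_le_of_ne hD (fun h => heD (by rw [h]; simp)))
  have hindx : ∀ D : Set α, D ⊆ {e, e', x} → x ∉ D → P.Indep D :=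
    fun D hD hxD => hC.2 D (lt_of_le_of_ne hD (fun h => hxD (by rw [h]; simp)))
  have he'i : P.Indep {e'} := hinde {e'} (by
      intro z hz; rw [mem_singleton_iff.1 hz]; simp) (by simp [hee'])
  have heQ : e ∈ (P.con {e'}).E := by
    rw [Matroid.con_ground]
    exact ⟨heE, by simp [hee']⟩
  have hQe : (P.con {e'}).Indep {e} := by
    rw [Matroid.con_indep_iff he'i]
    refine ⟨singleton_subset_iff.2 ⟨heE, by simp [hee']⟩, ?_⟩
    exact hindx _ (by intro z hz; rcases hz with rfl | hz
                      · simp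
                      · rw [mem_singleton_iff.1 hz]; simp)
      (by simp [Ne.symm he'x, Ne.symm hex])
  have hQx : (P.con {e'}).Indep {x} := by
    rw [Matroid.con_indep_iff he'i]
    refine ⟨singleton_subset_iff.2 ⟨hxE, by simp [Ne.symm he'x]⟩, ?_⟩
    exact hinde _ (by intro z hz; rcases hz with rfl | hz
                      · simp
                      · rw [mem_singleton_iff.1 hz]; simp)
      (by simp [hee', hex])
  have hQdep : ¬ (P.con {e'}).Indep {e, x} := by
    intro h
    rw [Matroid.con_indep_iff he'i] at h
    have h2 : P.Indep {e, e', x} := by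
      have h3 := h.2
      rwa [insert_comm] at h3
    exact hC.1.not_indep h2
  have hcomm : (P.con {e'}).del {e} = (P.del {e}).con {e'} :=
    Matroid.del_con_comm hee' he'i
  have hregQdel : ((P.con {e'}).del {e}).IsRegular := by
    rw [hcomm]
    exact hd.con {e'}
  intro 𝔽 _
  exact par_ext hex heQ hQe hQx hQdep (hregQdel 𝔽)

end Step

end Aux

/-- if a triangle {e, e′, t} and a triad {e, e′, f} share the
regular element e, then e′ is also regular. -/
theorem regularElem_of_fan (M : Matroid α) [M.Finite] (hb : M.IsBinary)
    (hc : M.KConnected 3) (hnr : ¬ M.IsRegular) (e e' t f : α)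
    (hne : e ≠ e') (het : e ≠ t) (he't : e' ≠ t) (hef : e ≠ f) (he'f : e' ≠ f)
    (hT' : M.IsCircuit' {e, e', t}) (hTs : M✶.IsCircuit' {e, e', f})
    (hreg : M.IsRegularElem e) :
    M.IsRegularElem e' := by
  obtain ⟨hdel, hcon⟩ := hreg
  constructor
  · -- (M.del {e'}).IsRegular
    have h1 : (M✶.del {e}).IsRegular := by
      have hh : M✶.del {e} = (M.con {e})✶ := by
        rw [Matroid.con, Matroid.dual_dual]
      rw [hh]
      exact hcon.dual
    have h2 : (M✶.con {e'}).IsRegular := step_con M✶ hne hef he'f hTs h1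
    have h3 : (M✶.con {e'})✶ = M.del {e'} := by
      rw [Matroid.con, Matroid.dual_dual, Matroid.dual_dual]
    rw [← h3]
    exact h2.dual
  · exact step_con M hne het he't hT' hdel
end
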